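/- Let k be an odd positive integer and let G be a group such that (g ⊗ g)^k = 1 in G ⊗ G for all g ∈ G. Then the short exact sequence 1 → ∇(G) → G ⊗ G → G ∧ G → 1 splits on the left, via the homomorphism α′ : G ⊗ G → ∇(G) defined on generators by α′(g ⊗ h) = [(g ⊗ h)(h ⊗ g)]^{-n} where k = 2n+1; consequently G ⊗ G ≅ ∇(G) × (G ∧ G). In particular, if G has odd exponent then π₃(SK(G,1)) ≅ H₂(G) × ∇(G) ≅ π₂ˢ(K(G,1)) × ∇(G). -/

import Mathlib

/- Nonabelian tensor square framework (Brown–Loday). -/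

namespace NATensor

variable (G : Type*) [Group G]

/-- The relator set for the nonabelian tensor square of `G`:
`g g' ⊗ h = (ᵍg' ⊗ ᵍh)(g ⊗ h)` and `g ⊗ h h' = (g ⊗ h)(ʰg ⊗ ʰh')`. -/
def rels : Set (FreeGroup (G × G)) :=
  {r | (∃ g g' h : G,
          r = FreeGroup.of (g * g', h) *
              (FreeGroup.of (g * g' * g⁻¹, g * h * g⁻¹) * FreeGroup.of (g, h))⁻¹) ∨
       (∃ g h h' : G,
          r = FreeGroup.of (g, h * h') *
              (FreeGroup.of (g, h) * FreeGroup.of (h * g * h⁻¹, h * h' * h⁻¹))⁻¹)}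

/-- The nonabelian tensor square `G ⊗ G`. -/
abbrev TS := PresentedGroup (rels G)

variable {G}

/-- The generator `g ⊗ h` of the nonabelian tensor square. -/
def tmul (g h : G) : TS G := PresentedGroup.of (g, h)

lemma mk_rel_eq_one {r : FreeGroup (G × G)} (hr : r ∈ rels G) :
    (PresentedGroup.mk (rels G) r : TS G) = 1 :=
  (QuotientGroup.eq_one_iff r).mpr (Subgroup.subset_normalClosure hr)

lemma tmul_rel₁ (g g' h : G) :
    tmul (g * g') h = tmul (g * g' * g⁻¹) (g * h * g⁻¹) * tmul g h := by
  have h1 := mk_rel_eq_one (G := G) (Or.inl ⟨g, g', h, rfl⟩)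
  simp only [map_mul, map_inv, mul_inv_eq_one] at h1
  exact h1

lemma tmul_rel₂ (g h h' : G) :
    tmul g (h * h') = tmul g h * tmul (h * g * h⁻¹) (h * h' * h⁻¹) := by
  have h1 := mk_rel_eq_one (G := G) (Or.inr ⟨g, h, h', rfl⟩)
  simp only [map_mul, map_inv, mul_inv_eq_one] at h1
  exact h1

variable (G)

/-- The homomorphism `κ : G ⊗ G → G`, `g ⊗ h ↦ [g,h] = g h g⁻¹ h⁻¹` (its image is `[G,G]`). -/
def kappa : TS G →* G :=
  PresentedGroup.toGroup (f := fun x : G × G => x.1 * x.2 * x.1⁻¹ * x.2⁻¹) (by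
    rintro r (⟨g, g', h, rfl⟩ | ⟨g, h, h', rfl⟩) <;>
      simp only [map_mul, map_inv, FreeGroup.lift_apply_of] <;> group)

variable {G}

@[simp] lemma kappa_tmul (g h : G) : kappa G (tmul g h) = g * h * g⁻¹ * h⁻¹ :=
  PresentedGroup.toGroup.of _

variable (G)

/-- `J(G) = ker κ ≅ π₃(SK(G,1))`. -/
def J : Subgroup (TS G) := (kappa G).ker

/-- `∇(G)`: the (normal) subgroup of `G ⊗ G` generated by the elements `x ⊗ x`. -/
def nabla : Subgroup (TS G) :=
  Subgroup.normalClosure {t | ∃ x : G, t = tmul x x}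

/-- `Δ(G)`: the (normal) subgroup of `G ⊗ G` generated by the `(x ⊗ y)(y ⊗ x)`. -/
def delta : Subgroup (TS G) :=
  Subgroup.normalClosure {t | ∃ x y : G, t = tmul x y * tmul y x}

instance : (nabla G).Normal := Subgroup.normalClosure_normal

instance : (delta G).Normal := Subgroup.normalClosure_normal

/-- The exterior square `G ∧ G = (G ⊗ G)/∇(G)`. -/
abbrev ES := TS G ⧸ nabla G

/-- The symmetric square `G ⊗̃ G = (G ⊗ G)/Δ(G)`. -/
abbrev SS := TS G ⧸ delta G

variable {G}

/-- The element `g ∧ h` of the exterior square. -/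
def emul (g h : G) : ES G := QuotientGroup.mk' (nabla G) (tmul g h)

/-- The image of `g ⊗ h` in the symmetric square. -/
def smul (g h : G) : SS G := QuotientGroup.mk' (delta G) (tmul g h)

variable {H : Type*} [Group H]

/-- The induced homomorphism `G ⊗ G → H ⊗ H` of a homomorphism `f : G → H`. -/
def tmap (f : G →* H) : TS G →* TS H :=
  PresentedGroup.toGroup (f := fun x : G × G => tmul (f x.1) (f x.2)) (by
    rintro r (⟨g, g', h, rfl⟩ | ⟨g, h, h', rfl⟩) <;>
      simp only [map_mul, map_inv, FreeGroup.lift_apply_of, mul_inv_eq_one]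
    · rw [tmul_rel₁]
    · rw [tmul_rel₂])

@[simp] lemma tmap_tmul (f : G →* H) (g h : G) :
    tmap f (tmul g h) = tmul (f g) (f h) :=
  PresentedGroup.toGroup.of _

lemma nabla_le_comap_nabla (f : G →* H) :
    nabla G ≤ MonoidHom.ker ((QuotientGroup.mk' (nabla H)).comp (tmap f)) := by
  refine Subgroup.normalClosure_le_normal ?_
  rintro _ ⟨y, rfl⟩
  simp only [SetLike.mem_coe, MonoidHom.mem_ker, MonoidHom.comp_apply, tmap_tmul,
    QuotientGroup.mk'_apply, QuotientGroup.eq_one_iff]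
  exact Subgroup.subset_normalClosure ⟨f y, rfl⟩

lemma delta_le_comap_delta (f : G →* H) :
    delta G ≤ MonoidHom.ker ((QuotientGroup.mk' (delta H)).comp (tmap f)) := by
  refine Subgroup.normalClosure_le_normal ?_
  rintro _ ⟨x, y, rfl⟩
  simp only [SetLike.mem_coe, MonoidHom.mem_ker, MonoidHom.comp_apply, map_mul, tmap_tmul,
    QuotientGroup.mk'_apply, ← QuotientGroup.mk_mul, QuotientGroup.eq_one_iff]
  exact Subgroup.subset_normalClosure ⟨f x, f y, rfl⟩

/-- The induced homomorphism `G ∧ G → H ∧ H` of a homomorphism `f : G → H`. -/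
def emap (f : G →* H) : ES G →* ES H :=
  QuotientGroup.lift (nabla G) ((QuotientGroup.mk' (nabla H)).comp (tmap f))
    (fun x hx => MonoidHom.mem_ker.mp (nabla_le_comap_nabla f hx))

@[simp] lemma emap_emul (f : G →* H) (g h : G) :
    emap f (emul g h) = emul (f g) (f h) := by
  simp [emap, emul, QuotientGroup.mk'_apply, QuotientGroup.lift_mk']
  show (QuotientGroup.mk' (nabla H)).comp (tmap f) (tmul g h) = _
  simp only [MonoidHom.comp_apply, tmap_tmul, QuotientGroup.mk'_apply]

/-- The induced homomorphism `G ⊗̃ G → H ⊗̃ H` of a homomorphism `f : G → H`. -/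
def smap (f : G →* H) : SS G →* SS H :=
  QuotientGroup.lift (delta G) ((QuotientGroup.mk' (delta H)).comp (tmap f))
    (fun x hx => MonoidHom.mem_ker.mp (delta_le_comap_delta f hx))

variable (G)

lemma nabla_le_ker_kappa : nabla G ≤ (kappa G).ker := by
  refine Subgroup.normalClosure_le_normal ?_
  rintro _ ⟨x, rfl⟩
  simp only [SetLike.mem_coe, MonoidHom.mem_ker, kappa_tmul]
  group

/-- The homomorphism `κ' : G ∧ G → G`, `g ∧ h ↦ [g,h]` (its image is `[G,G]`). -/
def kappa' : ES G →* G :=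
  QuotientGroup.lift (nabla G) (kappa G)
    (fun x hx => MonoidHom.mem_ker.mp (nabla_le_ker_kappa G hx))

/-- The Schur multiplier `M(G) = ker κ' ≅ H₂(G)`. -/
def M : Subgroup (ES G) := (kappa' G).ker

/-- `J̃(G) = J(G)/Δ(G) ≅ π₂ˢ(K(G,1))`, realized as the image of `J(G)` in `G ⊗̃ G`. -/
def Jt : Subgroup (SS G) := Subgroup.map (QuotientGroup.mk' (delta G)) (J G)

/-- `∇(G)/Δ(G)`, realized as the image of `∇(G)` in `G ⊗̃ G`. -/
def nablaBar : Subgroup (SS G) := Subgroup.map (QuotientGroup.mk' (delta G)) (nabla G)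

end NATensor

namespace NATensor

variable {G : Type*} [Group G]

/-- Conjugation action of `G` on `G ⊗ G`. -/
def cact (a : G) : TS G →* TS G := tmap (MulAut.conj a).toMonoidHom

@[simp] lemma cact_tmul (a g h : G) :
    cact a (tmul g h) = tmul (a * g * a⁻¹) (a * h * a⁻¹) := by
  simp [cact, tmap_tmul, MulAut.conj_apply]

lemma of_eq (g h : G) : (PresentedGroup.of (g, h) : TS G) = tmul g h := rfl

lemma hom_ext {H : Type*} [Group H] {f₁ f₂ : TS G →* H}
    (h : ∀ g h' : G, f₁ (tmul g h') = f₂ (tmul g h')) : f₁ = f₂ := by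
  refine PresentedGroup.ext fun x => ?_
  obtain ⟨g, h'⟩ := x
  exact h g h'

lemma tmul_congr {g g' h h' : G} (hg : g = g') (hh : h = h') :
    tmul g h = tmul g' h' := by rw [hg, hh]

lemma cact_cact (a b : G) (t : TS G) : cact a (cact b t) = cact (a * b) t := by
  have : (cact a).comp (cact b) = (cact (a*b) : TS G →* TS G) := by
    refine hom_ext fun g h => ?_
    simp only [MonoidHom.comp_apply, cact_tmul]
    exact tmul_congr (by group) (by group)
  exact DFunLike.congr_fun this t

lemma cact_one (t : TS G) : cact (1 : G) t = t := by
  have : (cact 1 : TS G →* TS G) = MonoidHom.id _ := by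
    refine hom_ext fun g h => ?_
    simp only [MonoidHom.id_apply, cact_tmul]
    exact tmul_congr (by group) (by group)
  exact DFunLike.congr_fun this t

lemma kappa_cact (a : G) (t : TS G) : kappa G (cact a t) = a * kappa G t * a⁻¹ := by
  have : (kappa G).comp (cact a) =
      ((MulAut.conj a).toMonoidHom).comp (kappa G) := by
    refine hom_ext fun g h => ?_
    simp only [MonoidHom.comp_apply, cact_tmul, kappa_tmul, MonoidHom.coe_coe,
      MulEquiv.coe_toMonoidHom, MulAut.conj_apply]
    group
  simpa using DFunLike.congr_fun this t

lemma rel₁' (a b c : G) : tmul (a * b) c = cact a (tmul b c) * tmul a c := by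
  rw [tmul_rel₁, cact_tmul]

lemma rel₂' (a b c : G) : tmul a (b * c) = tmul a b * cact b (tmul a c) := by
  rw [tmul_rel₂, cact_tmul]

lemma star_eq (g h x y : G) :
    cact g (cact h (tmul x y)) * tmul g h = tmul g h * cact h (cact g (tmul x y)) := by
  have e1 : tmul (g * x) (h * y) =
      cact g (tmul x h * cact h (tmul x y)) * (tmul g h * cact h (tmul g y)) := by
    rw [rel₁' g x (h*y), rel₂' x h y, rel₂' g h y]
  have e2 : tmul (g * x) (h * y) =
      (cact g (tmul x h) * tmul g h) * cact h (cact g (tmul x y) * tmul g y) := by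
    rw [rel₂' (g*x) h y, rel₁' g x h, rel₁' g x y]
  have e := e1.symm.trans e2
  simp only [map_mul, mul_assoc] at e
  have e' := mul_left_cancel e
  rw [← mul_assoc, ← mul_assoc] at e'
  exact mul_right_cancel e'

lemma conj_tmul (g h x y : G) :
    tmul g h * tmul x y * (tmul g h)⁻¹ =
      cact (g * h * g⁻¹ * h⁻¹) (tmul x y) := by
  have hs := star_eq g h (g⁻¹ * h⁻¹ * x * h * g) (g⁻¹ * h⁻¹ * y * h * g)
  simp only [cact_tmul] at hs
  rw [tmul_congr (g := g * (h * (g⁻¹ * h⁻¹ * x * h * g) * h⁻¹) * g⁻¹)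
        (show g * (h * (g⁻¹ * h⁻¹ * x * h * g) * h⁻¹) * g⁻¹
          = (g*h*g⁻¹*h⁻¹) * x * (g*h*g⁻¹*h⁻¹)⁻¹ by group)
        (show g * (h * (g⁻¹ * h⁻¹ * y * h * g) * h⁻¹) * g⁻¹
          = (g*h*g⁻¹*h⁻¹) * y * (g*h*g⁻¹*h⁻¹)⁻¹ by group)] at hs
  rw [tmul_congr (g := h * (g * (g⁻¹ * h⁻¹ * x * h * g) * g⁻¹) * h⁻¹)
        (show h * (g * (g⁻¹ * h⁻¹ * x * h * g) * g⁻¹) * h⁻¹ = x by group)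
        (show h * (g * (g⁻¹ * h⁻¹ * y * h * g) * g⁻¹) * h⁻¹ = y by group)] at hs
  rw [cact_tmul, mul_inv_eq_iff_eq_mul]
  exact hs.symm

lemma conj_tmul_all (g h : G) (t : TS G) :
    tmul g h * t * (tmul g h)⁻¹ = cact (g * h * g⁻¹ * h⁻¹) t := by
  have he : ((MulAut.conj (tmul g h)).toMonoidHom : TS G →* TS G)
      = cact (g * h * g⁻¹ * h⁻¹) :=
    hom_ext fun x y => by
      simpa [MulEquiv.coe_toMonoidHom, MulAut.conj_apply] using conj_tmul g h x y
  simpa [MulEquiv.coe_toMonoidHom, MulAut.conj_apply] using DFunLike.congr_fun he t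

lemma conj_eq_forall (s : TS G) : ∀ t : TS G, s * t * s⁻¹ = cact (kappa G s) t := by
  induction s using PresentedGroup.induction_on with
  | H z =>
    induction z using FreeGroup.induction_on with
    | C1 => intro t; simp [cact_one]
    | of p =>
      obtain ⟨g, h⟩ := p
      intro t
      show tmul g h * t * (tmul g h)⁻¹ = cact (kappa G (tmul g h)) t
      rw [conj_tmul_all, kappa_tmul]
    | inv_of p ih =>
      obtain ⟨g, h⟩ := p
      intro t
      rw [map_inv]
      show (tmul g h)⁻¹ * t * (tmul g h)⁻¹⁻¹ = cact (kappa G (tmul g h)⁻¹) t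
      set s : TS G := tmul g h with hsdef
      have ih' : ∀ u : TS G, s * u * s⁻¹ = cact (kappa G s) u := fun u => ih u
      have key := ih' (cact (kappa G s)⁻¹ t)
      rw [cact_cact, mul_inv_cancel, cact_one] at key
      rw [map_inv]
      calc s⁻¹ * t * s⁻¹⁻¹ = s⁻¹ * (s * cact (kappa G s)⁻¹ t * s⁻¹) * s := by
            rw [key]; group
        _ = cact (kappa G s)⁻¹ t := by group
    | mul a b iha ihb =>
      intro t
      rw [map_mul]
      set sa := (PresentedGroup.mk (rels G) a : TS G)
      set sb := (PresentedGroup.mk (rels G) b : TS G)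
      calc sa * sb * t * (sa * sb)⁻¹ = sa * (sb * t * sb⁻¹) * sa⁻¹ := by group
        _ = cact (kappa G sa) (cact (kappa G sb) t) := by rw [ihb t, iha _]
        _ = cact (kappa G sa * kappa G sb) t := cact_cact _ _ _
        _ = cact (kappa G (sa * sb)) t := by rw [map_mul]

lemma conj_eq (s t : TS G) : s * t * s⁻¹ = cact (kappa G s) t := conj_eq_forall s t

lemma central_of_kappa {s : TS G} (hs : kappa G s = 1) (t : TS G) :
    Commute s t := by
  have h1 := conj_eq s t
  rw [hs, cact_one] at h1
  calc s * t = s * t * s⁻¹ * s := by group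
    _ = t * s := by rw [h1]

end NATensor

namespace NATensor

variable {G : Type*} [Group G]

lemma kappa_beta (g h : G) : kappa G (tmul g h * tmul h g) = 1 := by
  rw [map_mul, kappa_tmul, kappa_tmul]; group

lemma beta_central (g h : G) (t : TS G) :
    Commute (tmul g h * tmul h g) t :=
  central_of_kappa (kappa_beta g h) t

lemma tmul_self_mem_nabla (x : G) : tmul x x ∈ nabla G :=
  Subgroup.subset_normalClosure ⟨x, rfl⟩

lemma nabla_central {s : TS G} (hs : s ∈ nabla G) (t : TS G) : Commute s t :=
  central_of_kappa (nabla_le_ker_kappa G hs) t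

lemma nabla_eq_closure :
    nabla G = Subgroup.closure {t : TS G | ∃ x : G, t = tmul x x} := by
  apply le_antisymm
  · have : (Subgroup.closure {t : TS G | ∃ x : G, t = tmul x x}).Normal := by
      constructor
      intro m hm g
      have hc : Commute m g := by
        refine central_of_kappa ?_ g
        have : Subgroup.closure {t : TS G | ∃ x : G, t = tmul x x} ≤ nabla G :=
          Subgroup.closure_le _ |>.mpr Subgroup.subset_normalClosure
        exact nabla_le_ker_kappa G (this hm)
      have : g * m * g⁻¹ = m := by
        rw [← hc.eq]; group
      rw [this]; exact hm
    exact Subgroup.normalClosure_le_normal Subgroup.subset_closure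
  · exact Subgroup.closure_le _ |>.mpr Subgroup.subset_normalClosure

lemma cact_mem_nabla (a : G) {t : TS G} (ht : t ∈ nabla G) :
    cact a t ∈ nabla G := by
  have : nabla G ≤ (nabla G).comap (cact a) := by
    conv_lhs => rw [nabla_eq_closure]
    refine Subgroup.closure_le _ |>.mpr ?_
    rintro _ ⟨x, rfl⟩
    simp only [SetLike.mem_coe, Subgroup.mem_comap, cact_tmul]
    exact tmul_self_mem_nabla (a * x * a⁻¹)
  exact this ht

lemma beta_mem_nabla (g h : G) : tmul g h * tmul h g ∈ nabla G := by
  -- first show cact h (tmul g h * tmul h g) ∈ nabla, via expanding (h*g ⊗ h*g)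
  have expand : tmul (h * g) (h * g) =
      cact h (tmul g h) * (cact h (cact h (tmul g g)) * (tmul h h * cact h (tmul h g))) := by
    rw [rel₁' h g (h * g), rel₂' g h g, rel₂' h h g, map_mul]
    group
  have hn1 : cact h (cact h (tmul g g)) ∈ nabla G :=
    cact_mem_nabla _ (cact_mem_nabla _ (tmul_self_mem_nabla g))
  have hn2 : tmul h h ∈ nabla G := tmul_self_mem_nabla h
  have hn12 : cact h (cact h (tmul g g)) * tmul h h ∈ nabla G :=
    Subgroup.mul_mem _ hn1 hn2
  have hD : tmul (h * g) (h * g) =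
      (cact h (tmul g h) * cact h (tmul h g)) *
        (cact h (cact h (tmul g g)) * tmul h h) := by
    rw [expand]
    have c : Commute (cact h (cact h (tmul g g)) * tmul h h) (cact h (tmul h g)) :=
      central_of_kappa (nabla_le_ker_kappa G hn12) _
    calc cact h (tmul g h) * (cact h (cact h (tmul g g)) * (tmul h h * cact h (tmul h g)))
        = cact h (tmul g h) * ((cact h (cact h (tmul g g)) * tmul h h) * cact h (tmul h g)) := by
          group
      _ = cact h (tmul g h) * (cact h (tmul h g) * (cact h (cact h (tmul g g)) * tmul h h)) := by
          rw [c.eq]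
      _ = cact h (tmul g h) * cact h (tmul h g) *
            (cact h (cact h (tmul g g)) * tmul h h) := by group
  have hmem : cact h (tmul g h * tmul h g) ∈ nabla G := by
    have : cact h (tmul g h) * cact h (tmul h g) =
        tmul (h * g) (h * g) * (cact h (cact h (tmul g g)) * tmul h h)⁻¹ :=
      eq_mul_inv_of_mul_eq hD.symm
    rw [map_mul, this]
    exact Subgroup.mul_mem _ (tmul_self_mem_nabla _) (Subgroup.inv_mem _ hn12)
  have := cact_mem_nabla h⁻¹ hmem
  rwa [cact_cact, inv_mul_cancel, cact_one] at this

lemma beta_rel1 (g g' h : G) :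
    tmul (g * g') h * tmul h (g * g') =
      cact g (tmul g' h * tmul h g') * (tmul g h * tmul h g) := by
  rw [rel₁' g g' h, rel₂' h g g', map_mul]
  have c : Commute (tmul g h * tmul h g) (cact g (tmul h g')) :=
    beta_central g h _
  calc cact g (tmul g' h) * tmul g h * (tmul h g * cact g (tmul h g'))
      = cact g (tmul g' h) * ((tmul g h * tmul h g) * cact g (tmul h g')) := by group
    _ = cact g (tmul g' h) * (cact g (tmul h g') * (tmul g h * tmul h g)) := by rw [c.eq]
    _ = cact g (tmul g' h) * cact g (tmul h g') * (tmul g h * tmul h g) := by group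

lemma beta_rel2 (g h h' : G) :
    tmul g (h * h') * tmul (h * h') g =
      (tmul g h * tmul h g) * cact h (tmul g h' * tmul h' g) := by
  rw [rel₂' g h h', rel₁' h h' g]
  simp only [map_mul]
  have c : Commute (cact h (tmul g h') * cact h (tmul h' g)) (tmul h g) := by
    refine central_of_kappa ?_ _
    rw [← map_mul, kappa_cact, kappa_beta]; group
  calc tmul g h * cact h (tmul g h') * (cact h (tmul h' g) * tmul h g)
      = tmul g h * ((cact h (tmul g h') * cact h (tmul h' g)) * tmul h g) := by group
    _ = tmul g h * (tmul h g * (cact h (tmul g h') * cact h (tmul h' g))) := by rw [c.eq]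
    _ = tmul g h * tmul h g * (cact h (tmul g h') * cact h (tmul h' g)) := by group

end NATensor

namespace NATensor

variable {G : Type*} [Group G]

/-- The left-splitting homomorphism `α' : G ⊗ G → G ⊗ G`,
`g ⊗ h ↦ ((g ⊗ h)(h ⊗ g))^(-n)`. -/
def alphaHom (n : ℕ) : TS G →* TS G :=
  PresentedGroup.toGroup
    (f := fun p : G × G => (tmul p.1 p.2 * tmul p.2 p.1) ^ (-(n : ℤ))) (by
    rintro r (⟨g, g', h, rfl⟩ | ⟨g, h, h', rfl⟩) <;>
      simp only [map_mul, map_inv, FreeGroup.lift_apply_of, mul_inv_eq_one]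
    · have h1 : tmul (g * g') h * tmul h (g * g') =
          (tmul (g * g' * g⁻¹) (g * h * g⁻¹) * tmul (g * h * g⁻¹) (g * g' * g⁻¹)) *
            (tmul g h * tmul h g) := by
        rw [beta_rel1, map_mul, cact_tmul, cact_tmul]
      rw [h1, (beta_central (g * g' * g⁻¹) (g * h * g⁻¹) _).mul_zpow]
    · have h2 : tmul g (h * h') * tmul (h * h') g =
          (tmul g h * tmul h g) *
            (tmul (h * g * h⁻¹) (h * h' * h⁻¹) * tmul (h * h' * h⁻¹) (h * g * h⁻¹)) := by
        rw [beta_rel2, map_mul, cact_tmul, cact_tmul]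
      rw [h2, (beta_central g h _).mul_zpow])

@[simp] lemma alphaHom_tmul (n : ℕ) (g h : G) :
    alphaHom n (tmul g h) = (tmul g h * tmul h g) ^ (-(n : ℤ)) :=
  PresentedGroup.toGroup.of _

lemma alphaHom_mem_nabla (n : ℕ) (x : TS G) : alphaHom n x ∈ nabla G := by
  refine PresentedGroup.generated_by (rels G) ((nabla G).comap (alphaHom n)) ?_ x
  intro p
  rw [Subgroup.mem_comap]
  show alphaHom n (tmul p.1 p.2) ∈ nabla G
  rw [alphaHom_tmul]
  exact Subgroup.zpow_mem _ (beta_mem_nabla _ _) _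

lemma alphaHom_id_on_nabla (n : ℕ) (hk : ∀ g : G, (tmul g g) ^ (2 * n + 1) = 1) :
    ∀ x ∈ nabla G, alphaHom n x = x := by
  intro x hx
  rw [nabla_eq_closure] at hx
  have hle : Subgroup.closure {t : TS G | ∃ x : G, t = tmul x x} ≤
      MonoidHom.eqLocus (alphaHom n) (MonoidHom.id (TS G)) := by
    refine (Subgroup.closure_le _).mpr ?_
    rintro _ ⟨y, rfl⟩
    have key : (tmul y y * tmul y y) ^ (-(n : ℤ)) = tmul y y := by
      set t : TS G := tmul y y with ht
      have h2 : t ^ (((2 * n + 1 : ℕ) : ℤ)) = 1 := by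
        rw [zpow_natCast]; exact hk y
      have harith : ((2 * n + 1 : ℕ) : ℤ) + 2 * (-(n : ℤ)) = 1 := by push_cast; ring
      calc (t * t) ^ (-(n : ℤ)) = (t ^ (2 : ℤ)) ^ (-(n : ℤ)) := by rw [zpow_two]
        _ = t ^ (2 * (-(n : ℤ))) := by rw [← zpow_mul]
        _ = t ^ (((2 * n + 1 : ℕ) : ℤ)) * t ^ (2 * (-(n : ℤ))) := by rw [h2, one_mul]
        _ = t ^ (((2 * n + 1 : ℕ) : ℤ) + 2 * (-(n : ℤ))) := (zpow_add t _ _).symm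
        _ = t := by rw [harith, zpow_one]
    show alphaHom n (tmul y y) = MonoidHom.id _ (tmul y y)
    rw [alphaHom_tmul, key, MonoidHom.id_apply]
  exact hle hx

lemma delta_le_nabla : delta G ≤ nabla G := by
  refine Subgroup.normalClosure_le_normal ?_
  rintro _ ⟨x, y, rfl⟩
  exact beta_mem_nabla x y

lemma nabla_le_delta (n : ℕ) (hk : ∀ g : G, (tmul g g) ^ (2 * n + 1) = 1) :
    nabla G ≤ delta G := by
  refine Subgroup.normalClosure_le_normal ?_
  rintro _ ⟨x, rfl⟩
  have h2 : tmul x x * tmul x x ∈ delta G :=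
    Subgroup.subset_normalClosure ⟨x, x, rfl⟩
  have key : (tmul x x * tmul x x) ^ (n + 1) = tmul x x := by
    rw [← sq, ← pow_mul]
    have : 2 * (n + 1) = (2 * n + 1) + 1 := by ring
    rw [this, pow_succ, hk x, one_mul]
  rw [SetLike.mem_coe, ← key]
  exact Subgroup.pow_mem _ h2 _

lemma kappa'_mk (x : TS G) :
    kappa' G (QuotientGroup.mk' (nabla G) x) = kappa G x := rfl

end NATensor

namespace NATensor

variable {G : Type*} [Group G]

lemma mk_cancel (N : Subgroup (TS G)) [N.Normal] {v w : TS G} (y : TS G)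
    (hv : v ∈ N) (hw : w ∈ N) :
    ((v * (y * w⁻¹) : TS G) : TS G ⧸ N) = (y : TS G ⧸ N) := by
  rw [QuotientGroup.mk_mul, QuotientGroup.mk_mul, QuotientGroup.mk_inv,
    (QuotientGroup.eq_one_iff v).mpr hv, (QuotientGroup.eq_one_iff w).mpr hw,
    inv_one, mul_one, one_mul]

end NATensor

open NATensor in
/-- if `k = 2n+1` is odd and `(g ⊗ g)^k = 1` for all `g ∈ G`, then
`1 → ∇(G) → G ⊗ G → G ∧ G → 1` splits on the left via the homomorphism `α'` with
`α'(g ⊗ h) = [(g ⊗ h)(h ⊗ g)]^{-n}`, whose image lies in `∇(G)` and which restricts to the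
identity on `∇(G)`; consequently `G ⊗ G ≅ ∇(G) × (G ∧ G)`.  In particular, if `G` has odd
exponent then `π₃(SK(G,1)) ≅ H₂(G) × ∇(G) ≅ π₂ˢ(K(G,1)) × ∇(G)`. -/
theorem tensor_square_splits_of_odd_power (G : Type*) [Group G] (n : ℕ)
    (hk : ∀ g : G, (tmul g g) ^ (2 * n + 1) = 1) :
    (∃ α' : TS G →* TS G,
        (∀ g h : G, α' (tmul g h) = (tmul g h * tmul h g) ^ (-(n : ℤ))) ∧
        (∀ x ∈ nabla G, α' x = x) ∧ α'.range ≤ nabla G) ∧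
    Nonempty (TS G ≃* ↥(nabla G) × ES G) ∧
    ((∀ g : G, g ^ (2 * n + 1) = 1) →
      Nonempty (↥(J G) ≃* ↥(M G) × ↥(nabla G)) ∧
      Nonempty (↥(J G) ≃* ↥(Jt G) × ↥(nabla G))) := by
  set A : TS G →* TS G := alphaHom n with hA
  have hmem : ∀ x : TS G, A x ∈ nabla G := alphaHom_mem_nabla n
  have hid : ∀ x ∈ nabla G, A x = x := alphaHom_id_on_nabla n hk
  have hAcomp : ∀ (v y : TS G), v ∈ nabla G → A (v * (y * (A y)⁻¹)) = v := by
    intro v y hv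
    rw [map_mul, map_mul, map_inv, hid v hv, hid _ (hmem y), mul_inv_cancel, mul_one]
  refine ⟨⟨A, fun g h => alphaHom_tmul n g h, hid, ?_⟩, ?_, ?_⟩
  · rintro _ ⟨x, rfl⟩; exact hmem x
  · -- TS G ≃* ∇ × ES
    refine ⟨MulEquiv.ofBijective
      ((A.codRestrict (nabla G) hmem).prod (QuotientGroup.mk' (nabla G))) ⟨?_, ?_⟩⟩
    · refine (injective_iff_map_eq_one _).mpr fun a ha => ?_
      simp only [Prod.ext_iff, Prod.fst_one, Prod.snd_one, Subtype.ext_iff,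
        MonoidHom.prod_apply, MonoidHom.codRestrict_apply, OneMemClass.coe_one,
        QuotientGroup.mk'_apply] at ha
      obtain ⟨ha1, ha2⟩ := ha
      have h2 : a ∈ nabla G := (QuotientGroup.eq_one_iff a).mp ha2
      rw [← hid a h2, ha1]
    · rintro ⟨⟨v, hv⟩, e⟩
      obtain ⟨y, rfl⟩ := QuotientGroup.mk'_surjective (nabla G) e
      refine ⟨v * (y * (A y)⁻¹), Prod.ext (Subtype.ext ?_) ?_⟩
      · exact hAcomp v y hv
      · exact mk_cancel (nabla G) y hv (hmem y)
  · intro _hexp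
    constructor
    · -- J ≃* M × ∇
      have hc1 : ∀ x : ↥(J G),
          ((QuotientGroup.mk' (nabla G)).comp (J G).subtype) x ∈ M G := fun x => by
        show kappa' G (QuotientGroup.mk' (nabla G) x.1) = 1
        rw [kappa'_mk]
        exact x.2
      refine ⟨MulEquiv.ofBijective
        ((((QuotientGroup.mk' (nabla G)).comp (J G).subtype).codRestrict (M G) hc1).prod
          ((A.comp (J G).subtype).codRestrict (nabla G) fun x => hmem x.1)) ⟨?_, ?_⟩⟩
      · refine (injective_iff_map_eq_one _).mpr fun a ha => ?_
        simp only [Prod.ext_iff, Prod.fst_one, Prod.snd_one, Subtype.ext_iff,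
          MonoidHom.prod_apply, MonoidHom.codRestrict_apply, MonoidHom.comp_apply,
          Subgroup.coe_subtype, OneMemClass.coe_one, QuotientGroup.mk'_apply] at ha
        obtain ⟨ha1, ha2⟩ := ha
        have h3 : (a : TS G) ∈ nabla G := (QuotientGroup.eq_one_iff (a : TS G)).mp ha1
        refine Subtype.ext ?_
        rw [← hid (a : TS G) h3, show A (a : TS G) = 1 from ha2]
        exact (OneMemClass.coe_one _).symm
      · rintro ⟨⟨m, hm⟩, ⟨v, hv⟩⟩
        obtain ⟨y, rfl⟩ := QuotientGroup.mk'_surjective (nabla G) m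
        have hyJ : y ∈ J G := by rwa [M, MonoidHom.mem_ker, kappa'_mk] at hm
        have hvJ : v ∈ J G := nabla_le_ker_kappa G hv
        have hAyJ : A y ∈ J G := nabla_le_ker_kappa G (hmem y)
        have hxJ : v * (y * (A y)⁻¹) ∈ J G := by
          show v * (y * (A y)⁻¹) ∈ (kappa G).ker
          rw [MonoidHom.mem_ker, map_mul, map_mul, map_inv,
            MonoidHom.mem_ker.mp hvJ, MonoidHom.mem_ker.mp hyJ,
            MonoidHom.mem_ker.mp hAyJ]
          group
        refine ⟨⟨v * (y * (A y)⁻¹), hxJ⟩,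
          Prod.ext (Subtype.ext ?_) (Subtype.ext ?_)⟩
        · exact mk_cancel (nabla G) y hv (hmem y)
        · exact hAcomp v y hv
    · -- J ≃* Jt × ∇
      have hnd : nabla G ≤ delta G := nabla_le_delta n hk
      have hdn : delta G ≤ nabla G := delta_le_nabla
      have hc2 : ∀ x : ↥(J G),
          ((QuotientGroup.mk' (delta G)).comp (J G).subtype) x ∈ Jt G := fun x =>
        ⟨x.1, x.2, rfl⟩
      refine ⟨MulEquiv.ofBijective
        ((((QuotientGroup.mk' (delta G)).comp (J G).subtype).codRestrict (Jt G) hc2).prod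
          ((A.comp (J G).subtype).codRestrict (nabla G) fun x => hmem x.1)) ⟨?_, ?_⟩⟩
      · refine (injective_iff_map_eq_one _).mpr fun a ha => ?_
        simp only [Prod.ext_iff, Prod.fst_one, Prod.snd_one, Subtype.ext_iff,
          MonoidHom.prod_apply, MonoidHom.codRestrict_apply, MonoidHom.comp_apply,
          Subgroup.coe_subtype, OneMemClass.coe_one, QuotientGroup.mk'_apply] at ha
        obtain ⟨ha1, ha2⟩ := ha
        have h3 : (a : TS G) ∈ nabla G :=
          hdn ((QuotientGroup.eq_one_iff (a : TS G)).mp ha1)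
        refine Subtype.ext ?_
        rw [← hid (a : TS G) h3, show A (a : TS G) = 1 from ha2]
        exact (OneMemClass.coe_one _).symm
      · rintro ⟨⟨jt, hjt⟩, ⟨v, hv⟩⟩
        obtain ⟨y, hyJ, rfl⟩ := hjt
        have hvJ : v ∈ J G := nabla_le_ker_kappa G hv
        have hAyJ : A y ∈ J G := nabla_le_ker_kappa G (hmem y)
        have hxJ : v * (y * (A y)⁻¹) ∈ J G := by
          show v * (y * (A y)⁻¹) ∈ (kappa G).ker
          rw [MonoidHom.mem_ker, map_mul, map_mul, map_inv,
            MonoidHom.mem_ker.mp hvJ, MonoidHom.mem_ker.mp hyJ,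
            MonoidHom.mem_ker.mp hAyJ]
          group
        refine ⟨⟨v * (y * (A y)⁻¹), hxJ⟩,
          Prod.ext (Subtype.ext ?_) (Subtype.ext ?_)⟩
        · exact mk_cancel (delta G) y (hnd hv) (hnd (hmem y))
        · exact hAcomp v y hv
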